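/- Let A_T be an n-dimensional evolution algebra over a field K with structure constants t_{ij}. Then there exists an n-dimensional evolution algebra A_{T'} over K, with structure constants t'_{ij}, that is strongly isotopic to A_T and satisfies: (a) if t'_{ii} = 0 for some i, then t'_{jk} = 0 for all j, k ≥ i; and (b) if t'_{ii} ≠ 0 for some i, then t'_{ij} = 0 for all j ≠ i. -/

import Mathlib

open scoped BigOperators

noncomputable section

/-- The product in the `n`-dimensional evolution algebra over `K` (on the model space
`Fin n → K`, whose standard basis is the natural basis) with structure constants `t`,
so that `eᵢ * eᵢ = ∑ⱼ t i j • eⱼ` and `eᵢ * eⱼ = 0` for `i ≠ j`. -/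
def evolMul {K : Type*} [Field K] {n : ℕ} (t : Fin n → Fin n → K)
    (x y : Fin n → K) : Fin n → K :=
  fun k => ∑ i, x i * y i * t i k

lemma evolMul_add_left {K : Type*} [Field K] {n : ℕ} (t : Fin n → Fin n → K)
    (a b v : Fin n → K) : evolMul t (a + b) v = evolMul t a v + evolMul t b v := by
  funext k
  simp [evolMul, add_mul, Finset.sum_add_distrib]

lemma evolMul_add_right {K : Type*} [Field K] {n : ℕ} (t : Fin n → Fin n → K)
    (v a b : Fin n → K) : evolMul t v (a + b) = evolMul t v a + evolMul t v b := by
  funext k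
  simp [evolMul, mul_add, add_mul, Finset.sum_add_distrib]

lemma evolMul_smul_left {K : Type*} [Field K] {n : ℕ} (t : Fin n → Fin n → K)
    (c : K) (a v : Fin n → K) : evolMul t (c • a) v = c • evolMul t a v := by
  funext k
  simp [evolMul, Finset.mul_sum, mul_assoc]

lemma evolMul_smul_right {K : Type*} [Field K] {n : ℕ} (t : Fin n → Fin n → K)
    (c : K) (v a : Fin n → K) : evolMul t v (c • a) = c • evolMul t v a := by
  funext k
  simp [evolMul, Finset.mul_sum]
  ring_nf
  apply Finset.sum_congr rfl
  intro i _
  ring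

/-- The annihilator of the evolution algebra with structure constants `t`. -/
def evolAnn {K : Type*} [Field K] {n : ℕ} (t : Fin n → Fin n → K) :
    Submodule K (Fin n → K) where
  carrier := {u | ∀ v, evolMul t u v = 0 ∧ evolMul t v u = 0}
  zero_mem' := by
    intro v
    constructor <;> · funext k; simp [evolMul]
  add_mem' := by
    intro a b ha hb v
    exact ⟨by rw [evolMul_add_left, (ha v).1, (hb v).1, add_zero],
           by rw [evolMul_add_right, (ha v).2, (hb v).2, add_zero]⟩
  smul_mem' := by
    intro c a ha v
    exact ⟨by rw [evolMul_smul_left, (ha v).1, smul_zero],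
           by rw [evolMul_smul_right, (ha v).2, smul_zero]⟩

/-- The derived algebra (span of all products). -/
def evolDerived {K : Type*} [Field K] {n : ℕ} (t : Fin n → Fin n → K) :
    Submodule K (Fin n → K) :=
  Submodule.span K {w | ∃ u v, evolMul t u v = w}

/-- Two evolution algebras (given by structure constants) are isomorphic. -/
def EvolIsom {K : Type*} [Field K] {n : ℕ} (t t' : Fin n → Fin n → K) : Prop :=
  ∃ f : (Fin n → K) ≃ₗ[K] (Fin n → K),
    ∀ u v, evolMul t' (f u) (f v) = f (evolMul t u v)

/-- Two evolution algebras (given by structure constants) are isotopic. -/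
def EvolIsotopic {K : Type*} [Field K] {n : ℕ} (t t' : Fin n → Fin n → K) : Prop :=
  ∃ f g h : (Fin n → K) ≃ₗ[K] (Fin n → K),
    ∀ u v, evolMul t' (f u) (g v) = h (evolMul t u v)

/-- Two evolution algebras (given by structure constants) are strongly isotopic. -/
def EvolStrongIsotopic {K : Type*} [Field K] {n : ℕ} (t t' : Fin n → Fin n → K) : Prop :=
  ∃ f h : (Fin n → K) ≃ₗ[K] (Fin n → K),
    ∀ u v, evolMul t' (f u) (f v) = h (evolMul t u v)

/-
STATEMENT 3: Every n-dimensional evolution algebra A_T is strongly isotopic to an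
n-dimensional evolution algebra A_{T'} whose structure constants t' satisfy:
(a) if t'_{ii} = 0 then t'_{jk} = 0 for all j, k ≥ i; and
(b) if t'_{ii} ≠ 0 then t'_{ij} = 0 for all j ≠ i.
-/
theorem exists_strongIsotopic_normal_form
    {K : Type*} [Field K] {n : ℕ} (t : Fin n → Fin n → K) :
    ∃ t' : Fin n → Fin n → K,
      EvolStrongIsotopic t t' ∧
      (∀ i : Fin n, t' i i = 0 → ∀ j k : Fin n, i ≤ j → i ≤ k → t' j k = 0) ∧
      (∀ i : Fin n, t' i i ≠ 0 → ∀ j : Fin n, j ≠ i → t' i j = 0) := by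
  classical
  obtain ⟨s, hsub, hspan, hind⟩ := exists_linearIndependent K (Set.range t)
  set B : Set (Fin n → K) := (show LinearIndepOn K id s from hind).extend (Set.subset_univ s) with hBdef
  have hsB : s ⊆ B := (show LinearIndepOn K id s from hind).subset_extend _
  set bB : Module.Basis B K (Fin n → K) := Module.Basis.extend (show LinearIndepOn K id s from hind) with hbBdef
  haveI : Fintype B := FiniteDimensional.fintypeBasisIndex bB
  haveI : Fintype s := Set.Finite.fintype ((Set.toFinite B).subset hsB)
  set r : ℕ := Fintype.card s with hrdef
  have hcardB : Fintype.card B = n := by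
    have := Module.finrank_eq_card_basis bB
    simpa using this.symm
  have hcards : r + Fintype.card ↥(B \ s) = n := by
    have hc := Fintype.card_congr (Equiv.Set.sumDiffSubset hsB)
    rw [Fintype.card_sum] at hc
    omega
  have hrn : r ≤ n := le_of_add_le_left hcards.le
  -- the equivalence sending `s` to the initial segment
  set es : s ≃ Fin r := Fintype.equivFin ↥s with hesdef
  set eD : ↥(B \ s) ≃ Fin (n - r) :=
    (Fintype.equivFin _).trans (finCongr (by omega)) with heDdef
  set e : B ≃ Fin n :=
    (Equiv.Set.sumDiffSubset hsB).symm.trans ((es.sumCongr eD).trans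
      (finSumFinEquiv.trans (finCongr (by omega)))) with hedef
  have he_s : ∀ (v : (Fin n → K)) (hv : v ∈ s),
      e ⟨v, hsB hv⟩ = ⟨(es ⟨v, hv⟩ : Fin r).val, lt_of_lt_of_le (es ⟨v, hv⟩).isLt hrn⟩ := by
    intro v hv
    have h1 : (Equiv.Set.sumDiffSubset hsB).symm ⟨v, hsB hv⟩ = Sum.inl ⟨v, hv⟩ :=
      Equiv.Set.sumDiffSubset_symm_apply_of_mem hsB hv
    simp only [hedef, Equiv.trans_apply, h1, Equiv.sumCongr_apply, Sum.map_inl,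
      finCongr_apply]
    apply Fin.ext
    simp
  set h : (Fin n → K) ≃ₗ[K] (Fin n → K) := bB.equiv (Pi.basisFun K (Fin n)) e with hhdef
  have hvs : ∀ (v : (Fin n → K)) (hv : v ∈ s),
      h v = Pi.single (⟨(es ⟨v, hv⟩ : Fin r).val,
        lt_of_lt_of_le (es ⟨v, hv⟩).isLt hrn⟩ : Fin n) 1 := by
    intro v hv
    have h1 : bB ⟨v, hsB hv⟩ = v := Module.Basis.extend_apply_self (show LinearIndepOn K id s from hind) _
    have h2 : h (bB ⟨v, hsB hv⟩) = Pi.basisFun K (Fin n) (e ⟨v, hsB hv⟩) :=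
      Module.Basis.equiv_apply bB _ _ _
    rw [h1] at h2
    rw [h2, he_s v hv, Pi.basisFun_apply]
  -- the submodule of vectors supported on indices `< r`
  set Z : Submodule K (Fin n → K) :=
    { carrier := {w | ∀ k : Fin n, r ≤ (k : ℕ) → w k = 0}
      add_mem' := by intro a b ha hb k hk; simp [ha k hk, hb k hk]
      zero_mem' := by intro k hk; rfl
      smul_mem' := by intro c a ha k hk; simp [ha k hk] } with hZdef
  have hkey : ∀ i : Fin n, h (t i) ∈ Z := by
    intro i
    have hti : t i ∈ Submodule.span K s := by
      rw [hspan]; exact Submodule.subset_span (Set.mem_range_self i)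
    have hle : Submodule.span K s ≤ Z.comap (h : (Fin n → K) →ₗ[K] (Fin n → K)) := by
      apply Submodule.span_le.2
      intro v hv
      have hZ : h v ∈ Z := by
        rw [hvs v hv]
        show ∀ k : Fin n, r ≤ (k : ℕ) →
          (Pi.single (⟨(es ⟨v, hv⟩ : Fin r).val,
            lt_of_lt_of_le (es ⟨v, hv⟩).isLt hrn⟩ : Fin n) 1 : Fin n → K) k = 0
        intro k hk
        apply Pi.single_eq_of_ne
        intro hkeq
        subst hkeq
        exact absurd hk (not_le.2 (es ⟨v, hv⟩).isLt)
      exact hZ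
    exact hle hti
  -- the row choice function
  have hgex : ∀ j : Fin r, ∃ i : Fin n, t i = ((es.symm j : s) : Fin n → K) := by
    intro j; exact hsub (es.symm j).2
  set g : Fin r → Fin n := fun j => Classical.choose (hgex j) with hgdef
  have hg : ∀ j, t (g j) = ((es.symm j : s) : Fin n → K) := fun j => Classical.choose_spec (hgex j)
  have hginj : Function.Injective g := by
    intro a b hab
    have : ((es.symm a : s) : Fin n → K) = ((es.symm b : s) : Fin n → K) := by
      rw [← hg a, ← hg b, hab]
    exact es.symm.injective (Subtype.ext this)
  haveI : Fintype ↥(Set.range g) := Fintype.ofFinite _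
  have hcardg : Fintype.card ↥(Set.range g)ᶜ = n - r := by
    rw [Fintype.card_compl_set, Set.card_range_of_injective hginj,
      Fintype.card_fin, Fintype.card_fin]
  set cC : ↥(Set.range g)ᶜ ≃ Fin (n - r) := Fintype.equivFinOfCardEq hcardg with hcCdef
  set π : Fin n ≃ Fin n :=
    (finCongr (by omega : n = r + (n - r))).trans <| finSumFinEquiv.symm.trans <|
      ((Equiv.ofInjective g hginj).sumCongr cC.symm).trans (Equiv.Set.sumCompl (Set.range g))
    with hπdef
  have hπ : ∀ (j : Fin n) (hj : (j : ℕ) < r), π j = g ⟨(j : ℕ), hj⟩ := by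
    intro j hj
    have h1 : (finCongr (by omega : n = r + (n - r))) j
        = Fin.castAdd (n - r) ⟨(j : ℕ), hj⟩ := by
      apply Fin.ext; simp
    rw [hπdef]
    simp only [Equiv.trans_apply]
    rw [h1, finSumFinEquiv_symm_apply_castAdd]
    simp [Equiv.ofInjective_apply]
  -- the new structure constants
  refine ⟨fun j k => h (t (π j)) k, ?_, ?_, ?_⟩
  · -- strong isotopy
    refine ⟨{ toFun := fun u => u ∘ π
              map_add' := fun a b => rfl
              map_smul' := fun c a => rfl
              invFun := fun u => u ∘ π.symm
              left_inv := fun u => by funext k; simp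
              right_inv := fun u => by funext k; simp }, h, ?_⟩
    intro u v
    funext k
    have hmul : evolMul t u v = ∑ i, (u i * v i) • t i := by
      funext m; simp [evolMul, Finset.sum_apply]
    have hrhs : h (evolMul t u v) k = ∑ i, u i * v i * h (t i) k := by
      rw [hmul, map_sum]
      simp only [Finset.sum_apply]
      refine Finset.sum_congr rfl fun i _ => ?_
      rw [map_smul]
      simp [mul_assoc]
    rw [hrhs]
    show (∑ j, (u ∘ π) j * (v ∘ π) j * h (t (π j)) k) = _
    exact Fintype.sum_equiv π _ _ (fun j => rfl)
  · -- condition (a)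
    intro i hii j k hij hik
    change h (t (π i)) i = 0 at hii
    have hkr : r ≤ (k : ℕ) := by
      by_contra hk
      push_neg at hk
      have hir : (i : ℕ) < r := lt_of_le_of_lt (Fin.le_iff_val_le_val.1 hik) hk
      -- then t' i i = 1, contradiction
      have : h (t (π i)) i = 1 := by
        rw [hπ i hir, hg, hvs _ (es.symm ⟨(i : ℕ), hir⟩).2]
        have hsymm : (⟨((es.symm ⟨(i : ℕ), hir⟩ : s) : Fin n → K),
            (es.symm ⟨(i : ℕ), hir⟩).2⟩ : s) = es.symm ⟨(i : ℕ), hir⟩ := Subtype.ext rfl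
        rw [hsymm, Equiv.apply_symm_apply]
        have : (⟨(i : ℕ), lt_of_lt_of_le hir hrn⟩ : Fin n) = i := Fin.ext rfl
        rw [this, Pi.single_eq_same]
      rw [this] at hii
      exact one_ne_zero hii
    exact hkey (π j) k hkr
  · -- condition (b)
    intro i hii j hji
    change h (t (π i)) i ≠ 0 at hii
    change h (t (π i)) j = 0
    have hir : (i : ℕ) < r := by
      by_contra hk
      push_neg at hk
      exact hii (hkey (π i) i hk)
    rw [hπ i hir, hg, hvs _ (es.symm ⟨(i : ℕ), hir⟩).2]
    have hsymm : (⟨((es.symm ⟨(i : ℕ), hir⟩ : s) : Fin n → K),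
        (es.symm ⟨(i : ℕ), hir⟩).2⟩ : s) = es.symm ⟨(i : ℕ), hir⟩ := Subtype.ext rfl
    rw [hsymm, Equiv.apply_symm_apply]
    have hi' : (⟨(i : ℕ), lt_of_lt_of_le hir hrn⟩ : Fin n) = i := Fin.ext rfl
    rw [hi']
    exact Pi.single_eq_of_ne hji 1
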